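/- For integers k ≥ 1 and m ≥ 0, the integral Ω(k,m) := ∫_0^1 ln^k(1−x)·ln^m(x)/x dx satisfies the duality Ω(k,m) = (k/(m+1))·Ω(m+1, k−1). -/

import Mathlib

open Real intervalIntegral

open MeasureTheory Set Filter Topology

lemma abs_log_le (x s : ℝ) (hx : 0 < x) (hx1 : x ≤ 1) (hs : 0 < s) : |log x| ≤ s⁻¹ * x ^ (-s) := by
  have h1 : log x ≤ 0 := log_nonpos hx.le hx1
  rw [abs_of_nonpos h1]
  have h2 : -log x = s⁻¹ * log (x ^ (-s)) := by
    rw [log_rpow hx]; field_simp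
  rw [h2]
  have h3 : log (x ^ (-s)) ≤ x ^ (-s) - 1 := Real.log_le_sub_one_of_pos (rpow_pos_of_pos hx _)
  have : (0:ℝ) < s⁻¹ := by positivity
  nlinarith [rpow_pos_of_pos hx (-s)]

-- |log x|^b integrable on (0,1]
lemma integrableOn_abs_log_pow (b : ℕ) :
    IntegrableOn (fun x => |log x| ^ b) (Ioc (0:ℝ) 1) volume := by
  set s : ℝ := (2 * (b + 1))⁻¹ with hs_def
  have hs : 0 < s := by positivity
  have hr : (-1:ℝ) < -(s * b) := by
    rw [hs_def]
    rw [neg_lt_neg_iff, inv_mul_eq_div, div_lt_iff₀ (by positivity)]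
    nlinarith [Nat.cast_nonneg (α := ℝ) b]
  have hint : IntegrableOn (fun x : ℝ => s⁻¹ ^ b * x ^ (-(s * b))) (Ioc (0:ℝ) 1) volume := by
    apply Integrable.const_mul
    have := (intervalIntegral.intervalIntegrable_rpow' (a := 0) (b := 1) hr)
    rwa [intervalIntegrable_iff_integrableOn_Ioc_of_le zero_le_one] at this
  refine hint.mono' ?_ ?_
  · exact ((measurable_log.abs.pow_const b).aestronglyMeasurable).restrict
  · rw [ae_restrict_iff' measurableSet_Ioc]
    filter_upwards with x hx
    have hx0 := hx.1
    have hx1 := hx.2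
    have h := abs_log_le x s hx0 hx1 hs
    have h2 : |log x| ^ b ≤ (s⁻¹ * x ^ (-s)) ^ b := by
      exact pow_le_pow_left₀ (abs_nonneg _) h b
    rw [norm_eq_abs, abs_of_nonneg (by positivity)]
    calc |log x| ^ b ≤ (s⁻¹ * x ^ (-s)) ^ b := h2
      _ = s⁻¹ ^ b * x ^ (-(s * b)) := by
          rw [mul_pow, ← rpow_natCast (x ^ (-s)) b, ← rpow_mul hx0.le]
          ring_nf

lemma abs_log_one_sub_le {x : ℝ} (hx : 0 < x) (hx2 : x ≤ 1/2) : |log (1 - x)| ≤ 2 * x := by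
  have h1 : (0:ℝ) < 1 - x := by linarith
  have h2 : log (1 - x) ≤ 0 := log_nonpos h1.le (by linarith)
  rw [abs_of_nonpos h2]
  have h3 : -log (1 - x) = log (1 - x)⁻¹ := by rw [log_inv]
  rw [h3]
  have h4 : log (1 - x)⁻¹ ≤ (1 - x)⁻¹ - 1 := Real.log_le_sub_one_of_pos (by positivity)
  have h5 : (1 - x)⁻¹ - 1 = x / (1 - x) := by field_simp; ring
  have h6 : x / (1 - x) ≤ 2 * x := by
    rw [div_le_iff₀ h1]; nlinarith
  linarith

lemma intervalIntegrable_L (a b : ℕ) (ha : 1 ≤ a) :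
    IntervalIntegrable (fun x => log (1 - x) ^ a * log x ^ b / x) volume 0 1 := by
  have hmeas : Measurable fun x : ℝ => log (1 - x) ^ a * log x ^ b / x :=
    (((Real.measurable_log.comp (measurable_const.sub measurable_id)).pow_const a).mul
      (Real.measurable_log.pow_const b)).div measurable_id
  have piece1 : IntervalIntegrable (fun x => log (1 - x) ^ a * log x ^ b / x) volume 0 (1/2) := by
    rw [intervalIntegrable_iff_integrableOn_Ioc_of_le (by norm_num)]
    have hint : IntegrableOn (fun x : ℝ => 2 * |log x| ^ b) (Ioc (0:ℝ) (1/2)) volume :=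
      (((integrableOn_abs_log_pow b).mono_set (Ioc_subset_Ioc_right (by norm_num))).const_mul 2)
    refine hint.mono' hmeas.aestronglyMeasurable.restrict ?_
    rw [ae_restrict_iff' measurableSet_Ioc]
    filter_upwards with x hx
    have hx0 := hx.1
    have hx2 := hx.2
    have h1 : |log (1 - x)| ≤ 2 * x := abs_log_one_sub_le hx0 hx2
    have h2 : 2 * x ≤ 1 := by linarith
    have h3 : |log (1 - x)| ^ a ≤ 2 * x := by
      calc |log (1 - x)| ^ a ≤ (2 * x) ^ a := pow_le_pow_left₀ (abs_nonneg _) h1 a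
        _ ≤ (2 * x) ^ 1 := pow_le_pow_of_le_one (by positivity) h2 ha
        _ = 2 * x := pow_one _
    rw [norm_eq_abs, abs_div, abs_mul, abs_pow, abs_pow, abs_of_pos hx0]
    calc |log (1 - x)| ^ a * |log x| ^ b / x ≤ 2 * x * |log x| ^ b / x := by
          gcongr <;> positivity
      _ = 2 * |log x| ^ b := by field_simp
  have piece2 : IntervalIntegrable (fun x => log (1 - x) ^ a * log x ^ b / x) volume (1/2) 1 := by
    rw [intervalIntegrable_iff_integrableOn_Ioc_of_le (by norm_num)]
    have hbase : IntervalIntegrable (fun x : ℝ => |log x| ^ a) volume 0 1 := by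
      rw [intervalIntegrable_iff_integrableOn_Ioc_of_le zero_le_one]
      exact integrableOn_abs_log_pow a
    have hrefl : IntervalIntegrable (fun x : ℝ => |log (1 - x)| ^ a) volume (1/2) 1 := by
      have h := (hbase.comp_sub_left 1).symm
      norm_num at h
      exact h.mono_set (by apply uIcc_subset_uIcc <;> simp [mem_uIcc] <;> norm_num)
    rw [intervalIntegrable_iff_integrableOn_Ioc_of_le (by norm_num)] at hrefl
    refine ((hrefl.const_mul 2).mono' hmeas.aestronglyMeasurable.restrict ?_)
    rw [ae_restrict_iff' measurableSet_Ioc]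
    filter_upwards with x hx
    have hx0 : (0:ℝ) < x := by linarith [hx.1]
    have hx1 := hx.2
    have hxh : (1:ℝ)/2 < x := hx.1
    have h1 : |log x| ≤ 1 := by
      rw [abs_of_nonpos (log_nonpos hx0.le hx1)]
      have : -log x = log x⁻¹ := by rw [log_inv]
      rw [this]
      have h4 : log x⁻¹ ≤ x⁻¹ - 1 := Real.log_le_sub_one_of_pos (by positivity)
      have h5 : x⁻¹ ≤ 2 := by
        rw [inv_le_iff_one_le_mul₀ hx0]; nlinarith
      linarith
    have h2 : |log x| ^ b ≤ 1 := pow_le_one₀ (abs_nonneg _) h1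
    rw [norm_eq_abs, abs_div, abs_mul, abs_pow, abs_pow, abs_of_pos hx0]
    rw [div_le_iff₀ hx0]
    have hb : |log (1 - x)| ^ a * |log x| ^ b ≤ |log (1 - x)| ^ a := by
      nlinarith [pow_nonneg (abs_nonneg (log (1-x))) a, pow_nonneg (abs_nonneg (log x)) b]
    nlinarith [pow_nonneg (abs_nonneg (log (1-x))) a]
  exact piece1.trans piece2

lemma tendsto_logpow (p q : ℕ) (hp : 1 ≤ p) :
    Tendsto (fun t : ℝ => log (1 - t) ^ p * log t ^ q) (𝓝[>] (0:ℝ)) (𝓝 0) := by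
  have hg : Tendsto (fun t : ℝ => 2 * (t * |log t| ^ q)) (𝓝[>] (0:ℝ)) (𝓝 0) := by
    have hbase : Tendsto (fun t : ℝ => t * |log t| ^ q) (𝓝[>] (0:ℝ)) (𝓝 0) := by
      rcases Nat.eq_zero_or_pos q with hq | hq
      · simpa [hq] using tendsto_nhdsWithin_of_tendsto_nhds
          (continuous_id'.tendsto (0:ℝ))
      · have h1 : Tendsto (fun t : ℝ => log t * t ^ ((1:ℝ)/q)) (𝓝[>] (0:ℝ)) (𝓝 0) :=
          tendsto_log_mul_rpow_nhdsGT_zero (by positivity)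
        have h2 : Tendsto (fun t : ℝ => |log t * t ^ ((1:ℝ)/q)| ^ q) (𝓝[>] (0:ℝ)) (𝓝 0) := by
          have := (h1.abs.pow q)
          simpa [zero_pow hq.ne'] using this
        refine h2.congr' ?_
        filter_upwards [self_mem_nhdsWithin] with t (ht : 0 < t)
        rw [abs_mul, mul_pow, abs_of_nonneg (rpow_nonneg ht.le _),
          ← rpow_natCast (t ^ ((1:ℝ)/q)) q, ← rpow_mul ht.le]
        rw [one_div, inv_mul_cancel₀ (by exact_mod_cast hq.ne')]
        rw [rpow_one]; ring
    simpa using hbase.const_mul 2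
  apply (tendsto_zero_iff_abs_tendsto_zero _).mpr
  apply squeeze_zero' (by filter_upwards with t; exact abs_nonneg _) ?_ hg
  filter_upwards [Ioo_mem_nhdsGT_of_mem (by norm_num : (0:ℝ) ∈ Ico 0 (1/2))] with t ht
  obtain ⟨ht0, ht2⟩ := ht
  have h1 : |log (1 - t)| ≤ 2 * t := abs_log_one_sub_le ht0 ht2.le
  have h2 : 2 * t ≤ 1 := by linarith
  have h3 : |log (1 - t)| ^ p ≤ 2 * t := by
    calc |log (1 - t)| ^ p ≤ (2 * t) ^ p := pow_le_pow_left₀ (abs_nonneg _) h1 p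
      _ ≤ (2 * t) ^ 1 := pow_le_pow_of_le_one (by positivity) h2 hp
      _ = 2 * t := pow_one _
  simp only [Function.comp_apply]
  rw [abs_mul, abs_pow, abs_pow]
  calc |log (1 - t)| ^ p * |log t| ^ q ≤ 2 * t * |log t| ^ q :=
        mul_le_mul_of_nonneg_right h3 (by positivity)
    _ = 2 * (t * |log t| ^ q) := by ring

/-- For integers `k ≥ 1` and `m ≥ 0`, the integral
`Ω(k,m) = ∫_0^1 lnᵏ(1-x) lnᵐ(x)/x dx` satisfies the duality
`Ω(k,m) = (k/(m+1)) Ω(m+1, k-1)`. -/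
theorem stmt16 (k m : ℕ) (hk : 1 ≤ k) :
    ∫ x in (0:ℝ)..1, (Real.log (1 - x)) ^ k * (Real.log x) ^ m / x =
      ((k : ℝ) / ((m : ℝ) + 1)) *
        ∫ x in (0:ℝ)..1, (Real.log (1 - x)) ^ (m + 1) * (Real.log x) ^ (k - 1) / x := by
  set c : ℝ := (k : ℝ) / ((m : ℝ) + 1) with hc
  set M : ℝ → ℝ := fun x => log x ^ k * log (1 - x) ^ m / (1 - x) with hM_def
  set L2 : ℝ → ℝ := fun x => log (1 - x) ^ (m + 1) * log x ^ (k - 1) / x with hL2_def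
  set φ : ℝ → ℝ := fun x => M x - c * L2 x with hφ_def
  set F : ℝ → ℝ := fun x => -(((m : ℝ) + 1)⁻¹) * (log (1 - x) ^ (m + 1) * log x ^ k) with hF_def
  have hm1 : ((m : ℝ) + 1) ≠ 0 := by positivity
  have hL1 : IntervalIntegrable (fun x => log (1 - x) ^ k * log x ^ m / x) volume 0 1 :=
    intervalIntegrable_L k m hk
  have hL2i : IntervalIntegrable L2 volume 0 1 := intervalIntegrable_L (m + 1) (k - 1) (by omega)
  have hMi : IntervalIntegrable M volume 0 1 := by
    have h := (hL1.comp_sub_left 1).symm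
    norm_num at h
    exact h
  have hφi : IntervalIntegrable φ volume 0 1 := hMi.sub (hL2i.const_mul c)
  -- substitution x ↦ 1 - x
  have hsub : (∫ x in (0:ℝ)..1, log (1 - x) ^ k * log x ^ m / x) = ∫ x in (0:ℝ)..1, M x := by
    have h := intervalIntegral.integral_comp_sub_left (a := 0) (b := 1) M 1
    simp only [sub_zero, sub_self] at h
    rw [← h]
    apply intervalIntegral.integral_congr
    intro x _
    simp only [hM_def]
    rw [show (1:ℝ) - (1 - x) = x by ring]
  -- derivative
  have hderiv : ∀ x ∈ Ioo (0:ℝ) 1, HasDerivAt F (φ x) x := by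
    intro x hx
    have hx0 : 0 < x := hx.1
    have hx1 : 0 < 1 - x := by linarith [hx.2]
    have hu : HasDerivAt (fun y : ℝ => log (1 - y)) (-1 / (1 - x)) x := by
      have h1 : HasDerivAt (fun y : ℝ => 1 - y) (-1) x := (hasDerivAt_id x).const_sub 1
      simpa using h1.log hx1.ne'
    have hv : HasDerivAt log x⁻¹ x := Real.hasDerivAt_log hx0.ne'
    have h1 : HasDerivAt (fun y : ℝ => log (1 - y) ^ (m + 1))
        (((m : ℝ) + 1) * log (1 - x) ^ m * (-1 / (1 - x))) x := by
      have := hu.pow (m + 1)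
      norm_num at this
      convert this using 2
      all_goals rfl
    have h2 : HasDerivAt (fun y : ℝ => log y ^ k) ((k : ℝ) * log x ^ (k - 1) * x⁻¹) x := hv.pow k
    have h3 := (h1.mul h2).const_mul (-(((m : ℝ) + 1)⁻¹))
    refine (h3.congr_deriv ?_)
    simp only [hφ_def, hM_def, hL2_def, hc]
    field_simp
    ring
  -- FTC on [t, 1-t]
  have hFTC : ∀ t ∈ Ioo (0:ℝ) (1/2), (∫ x in t..(1 - t), φ x) = F (1 - t) - F t := by
    intro t ht
    have huIcc : uIcc t (1 - t) = Icc t (1 - t) := uIcc_of_le (by linarith [ht.2])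
    apply intervalIntegral.integral_eq_sub_of_hasDerivAt
    · intro x hx
      rw [huIcc] at hx
      exact hderiv x ⟨lt_of_lt_of_le ht.1 hx.1, lt_of_le_of_lt hx.2 (by linarith [ht.1])⟩
    · refine hφi.mono_set ?_
      rw [huIcc, uIcc_of_le (zero_le_one)]
      exact Icc_subset_Icc (by linarith [ht.1]) (by linarith [ht.1])
  -- limit of the boundary terms
  have hbd : Tendsto (fun t => F (1 - t) - F t) (𝓝[>] (0:ℝ)) (𝓝 0) := by
    have hA : Tendsto (fun t : ℝ => F t) (𝓝[>] (0:ℝ)) (𝓝 0) := by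
      have := (tendsto_logpow (m + 1) k (by omega)).const_mul (-(((m : ℝ) + 1)⁻¹))
      simpa [hF_def] using this
    have hB : Tendsto (fun t : ℝ => F (1 - t)) (𝓝[>] (0:ℝ)) (𝓝 0) := by
      have h := (tendsto_logpow k (m + 1) hk).const_mul (-(((m : ℝ) + 1)⁻¹))
      rw [mul_zero] at h
      refine h.congr ?_
      intro t
      simp only [hF_def]
      rw [show (1:ℝ) - (1 - t) = t by ring]
      ring
    simpa using hB.sub hA
  -- limit of the truncated integrals
  have hIoc : IntegrableOn φ (Icc (0:ℝ) 1) volume := by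
    rw [integrableOn_Icc_iff_integrableOn_Ioc]
    rw [intervalIntegrable_iff_integrableOn_Ioc_of_le zero_le_one] at hφi
    exact hφi
  have hΦcont : ContinuousOn (fun u => ∫ x in (0:ℝ)..u, φ x) (Icc (0:ℝ) 1) := by
    have := intervalIntegral.continuousOn_primitive_interval (a := 0) (b := 1) (f := φ)
      (μ := volume) (by rwa [uIcc_of_le zero_le_one])
    rwa [uIcc_of_le zero_le_one] at this
  have hmem : Ioo (0:ℝ) (1/2) ∈ 𝓝[>] (0:ℝ) :=
    Ioo_mem_nhdsGT_of_mem (by norm_num : (0:ℝ) ∈ Ico 0 (1/2))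
  have htend_id : Tendsto (fun t : ℝ => t) (𝓝[>] (0:ℝ)) (𝓝[Icc (0:ℝ) 1] 0) := by
    rw [tendsto_nhdsWithin_iff]
    exact ⟨tendsto_nhdsWithin_of_tendsto_nhds tendsto_id,
      by filter_upwards [hmem] with t ht; exact ⟨ht.1.le, by linarith [ht.2]⟩⟩
  have htend_sub : Tendsto (fun t : ℝ => 1 - t) (𝓝[>] (0:ℝ)) (𝓝[Icc (0:ℝ) 1] 1) := by
    rw [tendsto_nhdsWithin_iff]
    constructor
    · have : Tendsto (fun t : ℝ => 1 - t) (𝓝 (0:ℝ)) (𝓝 (1 - 0)) :=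
        (continuous_const.sub continuous_id).tendsto 0
      simpa using tendsto_nhdsWithin_of_tendsto_nhds this
    · filter_upwards [hmem] with t ht; exact ⟨by linarith [ht.2], by linarith [ht.1]⟩
  have hlim2 : Tendsto (fun t => ∫ x in t..(1 - t), φ x) (𝓝[>] (0:ℝ))
      (𝓝 (∫ x in (0:ℝ)..1, φ x)) := by
    have hΦ1 : Tendsto (fun t : ℝ => ∫ x in (0:ℝ)..(1 - t), φ x) (𝓝[>] (0:ℝ))
        (𝓝 (∫ x in (0:ℝ)..1, φ x)) :=
      ((hΦcont 1 (by norm_num)).tendsto).comp htend_sub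
    have hΦ0 : Tendsto (fun t : ℝ => ∫ x in (0:ℝ)..t, φ x) (𝓝[>] (0:ℝ)) (𝓝 0) := by
      have := ((hΦcont 0 (by norm_num)).tendsto).comp htend_id
      simpa [Function.comp_def] using this
    have := hΦ1.sub hΦ0
    rw [sub_zero] at this
    refine this.congr' ?_
    filter_upwards [hmem] with t ht
    have h1 : IntervalIntegrable φ volume 0 (1 - t) := by
      refine hφi.mono_set ?_
      rw [uIcc_of_le (by linarith [ht.1, ht.2]), uIcc_of_le zero_le_one]
      exact Icc_subset_Icc le_rfl (by linarith [ht.1])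
    have h2 : IntervalIntegrable φ volume 0 t := by
      refine hφi.mono_set ?_
      rw [uIcc_of_le ht.1.le, uIcc_of_le zero_le_one]
      exact Icc_subset_Icc le_rfl (by linarith [ht.2])
    exact (intervalIntegral.integral_interval_sub_left h1 h2)
  -- conclude ∫ φ = 0
  have hkey : (∫ x in (0:ℝ)..1, φ x) = 0 := by
    have : Tendsto (fun t => ∫ x in t..(1 - t), φ x) (𝓝[>] (0:ℝ)) (𝓝 0) := by
      refine hbd.congr' ?_
      filter_upwards [hmem] with t ht
      exact (hFTC t ht).symm
    exact tendsto_nhds_unique hlim2 this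
  have hsplit : (∫ x in (0:ℝ)..1, φ x)
      = (∫ x in (0:ℝ)..1, M x) - c * ∫ x in (0:ℝ)..1, L2 x := by
    rw [hφ_def]
    rw [intervalIntegral.integral_sub hMi (hL2i.const_mul c),
      intervalIntegral.integral_const_mul]
  rw [hsub]
  rw [hsplit] at hkey
  linarith [hkey]
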